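/- Call a parking function on a nonempty finite set indecomposable (a block parking function) if it cannot be written as a concatenation Φ'|Φ'' of parking functions on two nonempty sets. Then every parking function on a nonempty finite set I can be written in exactly one way as a concatenation Φ^(1)|Φ^(2)|…|Φ^(k) of indecomposable parking functions (on nonempty sets). -/

import Mathlib

/-!
STATEMENT 1: Every parking function on a nonempty finite set `I` can be written in
exactly one way as a concatenation of indecomposable (block) parking functions.
-/

/-- `L` is a weak set composition of the finite set `I`. -/
def IsWeakSetComp {α : Type*} [DecidableEq α] (I : Finset α) (L : List (Finset α)) : Prop :=
  L.Pairwise Disjoint ∧ L.foldr (· ∪ ·) ∅ = I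

/-- `L` is a parking function on the finite set `I`. -/
def IsParkingFunction {α : Type*} [DecidableEq α] (I : Finset α) (L : List (Finset α)) : Prop :=
  IsWeakSetComp I L ∧ L.length = I.card ∧
    ∀ k, 1 ≤ k → k ≤ L.length → k ≤ ((L.take k).map Finset.card).sum

/-- `L` is an indecomposable (block) parking function: it is a parking function on some
nonempty finite set, and it cannot be written as the concatenation of two parking
functions on two disjoint nonempty sets. -/
def IsBlockPF {α : Type*} [DecidableEq α] (L : List (Finset α)) : Prop :=
  (∃ I : Finset α, I.Nonempty ∧ IsParkingFunction I L) ∧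
    ¬ ∃ (L₁ L₂ : List (Finset α)) (S T : Finset α),
        S.Nonempty ∧ T.Nonempty ∧ Disjoint S T ∧
        IsParkingFunction S L₁ ∧ IsParkingFunction T L₂ ∧ L = L₁ ++ L₂

set_option linter.unusedSectionVars false
set_option linter.unusedVariables false

section
variable {α : Type*} [DecidableEq α]

def BU (L : List (Finset α)) : Finset α := L.foldr (· ∪ ·) ∅

def csum (L : List (Finset α)) : ℕ := (L.map Finset.card).sum

lemma csum_append (L₁ L₂ : List (Finset α)) : csum (L₁ ++ L₂) = csum L₁ + csum L₂ := by
  simp [csum]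

lemma disjoint_BU {a : Finset α} {L : List (Finset α)} (h : ∀ x ∈ L, Disjoint a x) :
    Disjoint a (BU L) := by
  induction L with
  | nil => simp [BU]
  | cons b t ih =>
    simp only [BU, List.foldr_cons, Finset.disjoint_union_right]
    exact ⟨h b (by simp), ih fun x hx => h x (by simp [hx])⟩

lemma card_BU {L : List (Finset α)} (h : L.Pairwise Disjoint) : (BU L).card = csum L := by
  induction L with
  | nil => simp [BU, csum]
  | cons b t ih =>
    rw [List.pairwise_cons] at h
    have hd : Disjoint b (BU t) := disjoint_BU h.1
    show (b ∪ BU t).card = _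
    rw [Finset.card_union_of_disjoint hd, ih h.2]
    simp [csum]

def PFn (L : List (Finset α)) : Prop :=
  L.Pairwise Disjoint ∧ csum L = L.length ∧
    ∀ k, 1 ≤ k → k ≤ L.length → k ≤ csum (L.take k)

lemma isPF_iff {I : Finset α} {L : List (Finset α)} :
    IsParkingFunction I L ↔ PFn L ∧ BU L = I := by
  constructor
  · rintro ⟨⟨pd, hU⟩, hlen, hk⟩
    have hU' : BU L = I := hU
    have : csum L = L.length := by rw [← card_BU pd, hU', ← hlen]
    exact ⟨⟨pd, this, fun k h1 h2 => hk k h1 h2⟩, hU'⟩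
  · rintro ⟨⟨pd, hs, hk⟩, hU⟩
    refine ⟨⟨pd, hU⟩, ?_, hk⟩
    rw [← hU, card_BU pd, hs]

lemma pf_take {L : List (Finset α)} {k : ℕ} (h : PFn L) (hkle : k ≤ L.length)
    (hk : csum (L.take k) = k) : PFn (L.take k) := by
  obtain ⟨pd, hs, hp⟩ := h
  refine ⟨List.Pairwise.sublist (List.take_sublist k L) pd, by simp [hk, hkle], ?_⟩
  intro j h1 h2
  rw [List.length_take] at h2
  have hjk : j ≤ k := le_trans h2 (min_le_left _ _)
  rw [List.take_take, min_eq_left hjk]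
  exact hp j h1 (le_trans hjk hkle)

lemma pf_drop {L : List (Finset α)} {k : ℕ} (h : PFn L) (hkle : k ≤ L.length)
    (hk : csum (L.take k) = k) : PFn (L.drop k) := by
  obtain ⟨pd, hs, hp⟩ := h
  have hsplit : csum (L.take k) + csum (L.drop k) = csum L := by
    rw [← csum_append, List.take_append_drop]
  refine ⟨List.Pairwise.sublist (List.drop_sublist k L) pd, ?_, ?_⟩
  · rw [List.length_drop]; omega
  · intro j h1 h2
    rw [List.length_drop] at h2
    have hadd : L.take (k + j) = L.take k ++ (L.drop k).take j := List.take_add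
    have := hp (k + j) (by omega) (by omega)
    rw [hadd, csum_append, hk] at this
    omega

/-- Indecomposability reformulated. -/
def Indec (L : List (Finset α)) : Prop :=
  PFn L ∧ 0 < L.length ∧ ∀ k, 0 < k → k < L.length → k < csum (L.take k)

lemma BU_disjoint_of_pairwise {A B : List (Finset α)} (h : (A ++ B).Pairwise Disjoint) :
    Disjoint (BU A) (BU B) := by
  rw [List.pairwise_append] at h
  refine Finset.disjoint_left.mpr ?_
  have : ∀ x ∈ A, Disjoint (BU B) x := by
    intro x hx
    exact (disjoint_BU fun y hy => h.2.2 x hx y hy).symm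
  have hd : Disjoint (BU B) (BU A) := disjoint_BU this
  exact fun {a} ha hb => Finset.disjoint_left.mp hd hb ha

lemma blockPF_iff {L : List (Finset α)} : IsBlockPF L ↔ Indec L := by
  constructor
  · rintro ⟨⟨I, hIne, hPF⟩, hnd⟩
    obtain ⟨hpf, hU⟩ := isPF_iff.mp hPF
    have hlen : 0 < L.length := by
      have := hpf.2.1
      have hc : (BU L).card = csum L := card_BU hpf.1
      rw [hU] at hc
      have := Finset.card_pos.mpr hIne
      omega
    refine ⟨hpf, hlen, ?_⟩
    intro k hk0 hkl
    rcases lt_or_eq_of_le (hpf.2.2 k hk0 hkl.le) with h | h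
    · exact h
    exfalso
    apply hnd
    refine ⟨L.take k, L.drop k, BU (L.take k), BU (L.drop k), ?_, ?_, ?_, ?_, ?_, (List.take_append_drop k L).symm⟩
    · rw [← Finset.card_pos, card_BU (List.Pairwise.sublist (List.take_sublist k L) hpf.1), ← h]
      omega
    · rw [← Finset.card_pos, card_BU (List.Pairwise.sublist (List.drop_sublist k L) hpf.1)]
      have hsplit : csum (L.take k) + csum (L.drop k) = csum L := by
        rw [← csum_append, List.take_append_drop]
      have := hpf.2.1
      omega
    · have : ((L.take k) ++ (L.drop k)).Pairwise Disjoint := by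
        rw [List.take_append_drop]; exact hpf.1
      exact BU_disjoint_of_pairwise this
    · exact isPF_iff.mpr ⟨pf_take hpf hkl.le h.symm, rfl⟩
    · exact isPF_iff.mpr ⟨pf_drop hpf hkl.le h.symm, rfl⟩
  · rintro ⟨hpf, hlen, hstrict⟩
    constructor
    · refine ⟨BU L, ?_, isPF_iff.mpr ⟨hpf, rfl⟩⟩
      rw [← Finset.card_pos, card_BU hpf.1, hpf.2.1]
      exact hlen
    · rintro ⟨L₁, L₂, S, T, hS, hT, hST, h1, h2, heq⟩
      obtain ⟨hpf1, hU1⟩ := isPF_iff.mp h1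
      obtain ⟨hpf2, hU2⟩ := isPF_iff.mp h2
      have hc1 : csum L₁ = L₁.length := hpf1.2.1
      have hc2 : csum L₂ = L₂.length := hpf2.2.1
      have hS0 : 0 < L₁.length := by
        have : S.card = csum L₁ := by rw [← hU1, card_BU hpf1.1]
        have := Finset.card_pos.mpr hS
        omega
      have hT0 : 0 < L₂.length := by
        have : T.card = csum L₂ := by rw [← hU2, card_BU hpf2.1]
        have := Finset.card_pos.mpr hT
        omega
      have hlen2 : L.length = L₁.length + L₂.length := by rw [heq, List.length_append]
      have htake : L.take L₁.length = L₁ := by rw [heq, List.take_left]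
      have := hstrict L₁.length hS0 (by omega)
      rw [htake, hc1] at this
      omega

lemma flatten_eq_nil {Ls : List (List (Finset α))} (h : Ls.flatten = [])
    (hne : ∀ P ∈ Ls, P ≠ []) : Ls = [] := by
  cases Ls with
  | nil => rfl
  | cons B T =>
    exfalso
    rw [List.flatten_cons, List.append_eq_nil_iff] at h
    exact hne B (by simp) h.1

lemma block_ne_nil {P : List (Finset α)} (h : IsBlockPF P) : P ≠ [] := by
  have := (blockPF_iff.mp h).2.1
  exact List.ne_nil_of_length_pos this

lemma exists_decomp (n : ℕ) : ∀ L : List (Finset α), L.length ≤ n → PFn L →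
    ∃ Ls : List (List (Finset α)), Ls.flatten = L ∧ ∀ P ∈ Ls, IsBlockPF P := by
  induction n with
  | zero =>
    intro L hlen _
    have : L = [] := List.eq_nil_of_length_eq_zero (by omega)
    exact ⟨[], by simp [this], by simp⟩
  | succ n ih =>
    intro L hlen hpf
    rcases eq_or_ne L [] with rfl | hne
    · exact ⟨[], by simp, by simp⟩
    have hL0 : 0 < L.length := List.length_pos_iff.mpr hne
    have hex : ∃ k, 1 ≤ k ∧ csum (L.take k) = k := by
      refine ⟨L.length, hL0, ?_⟩
      rw [List.take_length]; exact hpf.2.1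
    classical
    set k := Nat.find hex with hkdef
    obtain ⟨hk1, hks⟩ := Nat.find_spec hex
    have hkle : k ≤ L.length := Nat.find_min' hex ⟨hL0, by rw [List.take_length]; exact hpf.2.1⟩
    have hblock : Indec (L.take k) := by
      refine ⟨pf_take hpf hkle hks, by rw [List.length_take]; omega, ?_⟩
      intro j hj0 hjl
      rw [List.length_take] at hjl
      have hjk : j < k := lt_of_lt_of_le hjl (min_le_left _ _)
      rw [List.take_take, min_eq_left hjk.le]
      rcases lt_or_eq_of_le (hpf.2.2 j hj0 (by omega)) with h | h
      · exact h
      · exact absurd ⟨hj0, h.symm⟩ (Nat.find_min hex hjk)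
    have hdrop : PFn (L.drop k) := pf_drop hpf hkle hks
    have hdlen : (L.drop k).length ≤ n := by rw [List.length_drop]; omega
    obtain ⟨Ls', h1, h2⟩ := ih (L.drop k) hdlen hdrop
    refine ⟨L.take k :: Ls', ?_, ?_⟩
    · rw [List.flatten_cons, h1, List.take_append_drop]
    · intro P hP
      rcases List.mem_cons.mp hP with rfl | hP
      · exact blockPF_iff.mpr hblock
      · exact h2 P hP

lemma first_len_not_lt {B B' r r' : List (Finset α)} (h : B ++ r = B' ++ r')
    (hB : Indec B) (hB' : Indec B') : ¬ B.length < B'.length := by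
  intro hlt
  have hBtake : B = B'.take B.length := by
    have h1 : B = (B ++ r).take B.length := List.take_left.symm
    rw [h, List.take_append_of_le_length hlt.le] at h1
    exact h1
  have hcs : csum B = B.length := hB.1.2.1
  have := hB'.2.2 B.length hB.2.1 hlt
  rw [← hBtake, hcs] at this
  omega

lemma unique_decomp (n : ℕ) : ∀ L : List (Finset α), L.length ≤ n →
    ∀ Ls Ls' : List (List (Finset α)), Ls.flatten = L → Ls'.flatten = L →
    (∀ P ∈ Ls, IsBlockPF P) → (∀ P ∈ Ls', IsBlockPF P) → Ls = Ls' := by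
  induction n with
  | zero =>
    intro L hlen Ls Ls' h1 h2 hb1 hb2
    have : L = [] := List.eq_nil_of_length_eq_zero (by omega)
    subst this
    rw [flatten_eq_nil h1 fun P hP => block_ne_nil (hb1 P hP),
        flatten_eq_nil h2 fun P hP => block_ne_nil (hb2 P hP)]
  | succ n ih =>
    intro L hlen Ls Ls' h1 h2 hb1 hb2
    rcases eq_or_ne L [] with rfl | hne
    · rw [flatten_eq_nil h1 fun P hP => block_ne_nil (hb1 P hP),
          flatten_eq_nil h2 fun P hP => block_ne_nil (hb2 P hP)]
    cases Ls with
    | nil => exact absurd h1.symm hne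
    | cons B T =>
      cases Ls' with
      | nil => exact absurd h2.symm hne
      | cons B' T' =>
        have hB : Indec B := blockPF_iff.mp (hb1 B (by simp))
        have hB' : Indec B' := blockPF_iff.mp (hb2 B' (by simp))
        rw [List.flatten_cons] at h1 h2
        have happ : B ++ T.flatten = B' ++ T'.flatten := by rw [h1, h2]
        have hlen_eq : B.length = B'.length := by
          have h3 := first_len_not_lt happ hB hB'
          have h4 := first_len_not_lt happ.symm hB' hB
          omega
        obtain ⟨hBB, hTT⟩ := List.append_inj happ hlen_eq
        subst hBB
        have hflen : T.flatten.length ≤ n := by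
          have : L.length = B.length + T.flatten.length := by
            rw [← h1, List.length_append]
          have := hB.2.1
          omega
        have := ih T.flatten hflen T T' rfl hTT.symm
          (fun P hP => hb1 P (by simp [hP])) (fun P hP => hb2 P (by simp [hP]))
        rw [this]

end

theorem unique_block_decomposition {α : Type*} [DecidableEq α]
    (I : Finset α) (hI : I.Nonempty) (Φ : List (Finset α))
    (hΦ : IsParkingFunction I Φ) :
    ∃! Ls : List (List (Finset α)), Ls.flatten = Φ ∧ ∀ P ∈ Ls, IsBlockPF P := by
  have hpf : PFn Φ := (isPF_iff.mp hΦ).1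
  obtain ⟨Ls, h1, h2⟩ := exists_decomp Φ.length Φ le_rfl hpf
  refine ⟨Ls, ⟨h1, h2⟩, ?_⟩
  rintro y ⟨hy1, hy2⟩
  exact unique_decomp Φ.length Φ le_rfl y Ls hy1 h1 hy2 h2
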